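/- Let n ≥ 1 and let W be an n×n integer matrix. Define n×n matrices W' and W'' by W'_{ij} = n·W_{ij} + (j−1) and W''_{ij} = n·W_{ij}, and let K = W' ⋆ W'' be their distance product. Then for all indices i, j, (K_{ij} mod n) + 1 equals the smallest k ∈ {1,…,n} such that W_{ik} + W_{kj} = (W ⋆ W)_{ij}; in particular, the matrix (K mod n) + 1 is a witness matrix for the distance-product square W ⋆ W. -/

import Mathlib

/-- The distance (min-plus) product of two `n × n` integer matrices,
`(A ⋆ B) i j = min_k (A i k + B k j)`. -/
def distProd {n : ℕ} (A B : Fin n → Fin n → ℤ) : Fin n → Fin n → ℤ :=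
  fun i j => Finset.univ.inf' ⟨i, Finset.mem_univ i⟩ fun k => A i k + B k j

/-- With `W'_{ij} = n·W_{ij} + (j−1)` and `W''_{ij} = n·W_{ij}`
and `K = W' ⋆ W''`, the quantity `(K_{ij} mod n) + 1` equals the smallest
`k ∈ {1,…,n}` such that `W_{ik} + W_{kj} = (W ⋆ W)_{ij}`; in particular,
`(K mod n) + 1` is a witness matrix for the distance-product square `W ⋆ W`.
(Indices are 0-based here, so the 1-based index `k` corresponds to the entry at
`⟨k-1, _⟩`, and the 1-based offset `j − 1` is the value `(j : ℕ)`.) -/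
theorem mod_add_one_eq_smallest_witness (n : ℕ) (hn : 1 ≤ n) (W : Fin n → Fin n → ℤ)
    (W' W'' : Fin n → Fin n → ℤ)
    (hW' : ∀ i j, W' i j = (n : ℤ) * W i j + ((j : ℕ) : ℤ))
    (hW'' : ∀ i j, W'' i j = (n : ℤ) * W i j)
    (K : Fin n → Fin n → ℤ) (hK : K = distProd W' W'') :
    ∀ i j, K i j % (n : ℤ) + 1 =
      ((sInf {k : ℕ | 1 ≤ k ∧ ∃ h : k - 1 < n,
          W i ⟨k - 1, h⟩ + W ⟨k - 1, h⟩ j = distProd W W i j} : ℕ) : ℤ) := by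
  intro i j
  set M : ℤ := distProd W W i j with hM
  -- the minimum is attained
  obtain ⟨kstar, -, hkstar⟩ :=
    Finset.exists_mem_eq_inf' (⟨i, Finset.mem_univ i⟩ : Finset.univ.Nonempty)
      (fun k : Fin n => W i k + W k j)
  have hMle : ∀ k : Fin n, M ≤ W i k + W k j := by
    intro k
    exact Finset.inf'_le _ (Finset.mem_univ k)
  -- the 0-based set of minimizers
  set T0 : Set ℕ := {k : ℕ | ∃ h : k < n, W i ⟨k, h⟩ + W ⟨k, h⟩ j = M} with hT0
  have hT0ne : T0.Nonempty := ⟨(kstar : ℕ), kstar.isLt, by exact hkstar.symm⟩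
  set m : ℕ := sInf T0 with hm
  obtain ⟨hmn, hmeq⟩ : ∃ h : m < n, W i ⟨m, h⟩ + W ⟨m, h⟩ j = M := Nat.sInf_mem hT0ne
  have hmle : ∀ k ∈ T0, m ≤ k := fun k hk => Nat.sInf_le hk
  -- compute K i j
  have hKval : K i j = (n : ℤ) * M + (m : ℕ) := by
    rw [hK]
    apply le_antisymm
    · have := Finset.inf'_le (fun k : Fin n => W' i k + W'' k j)
        (Finset.mem_univ (⟨m, hmn⟩ : Fin n))
      refine le_trans (by simpa [distProd] using this) ?_
      rw [hW', hW'', ← hmeq]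
      push_cast
      ring_nf
      simp [mul_comm]
    · apply Finset.le_inf'
      intro k _
      rw [hW', hW'']
      have hMk := hMle k
      rcases eq_or_lt_of_le hMk with heq | hlt
      · have hk0 : (k : ℕ) ∈ T0 := ⟨k.isLt, by simpa using heq.symm⟩
        have := hmle _ hk0
        have : ((m : ℕ) : ℤ) ≤ ((k : ℕ) : ℤ) := by exact_mod_cast this
        nlinarith [hMle k]
      · have h1 : M + 1 ≤ W i k + W k j := hlt
        have hkn : ((m : ℕ) : ℤ) < (n : ℤ) := by exact_mod_cast hmn
        have hk0 : (0 : ℤ) ≤ ((k : ℕ) : ℤ) := Int.ofNat_nonneg _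
        have hnpos : (0 : ℤ) < n := by exact_mod_cast hn
        nlinarith
  have hmod : K i j % (n : ℤ) = (m : ℕ) := by
    rw [hKval]
    have : ((n : ℤ) * M + (m : ℕ)) % n = ((m : ℕ) : ℤ) % n := by
      rw [add_comm, Int.add_mul_emod_self_left]
    rw [this, Int.emod_eq_of_lt (Int.ofNat_nonneg _) (by exact_mod_cast hmn)]
  rw [hmod]
  -- now compute the sInf of the shifted set
  have hT : sInf {k : ℕ | 1 ≤ k ∧ ∃ h : k - 1 < n,
      W i ⟨k - 1, h⟩ + W ⟨k - 1, h⟩ j = distProd W W i j} = m + 1 := by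
    apply le_antisymm
    · apply Nat.sInf_le
      refine ⟨Nat.le_add_left 1 m, ?_⟩
      simpa using ⟨hmn, hmeq⟩
    · apply le_csInf
      · exact ⟨m + 1, Nat.le_add_left 1 m, by simpa using ⟨hmn, hmeq⟩⟩
      · rintro k ⟨hk1, hkn, hkeq⟩
        have : k - 1 ∈ T0 := ⟨hkn, hkeq⟩
        have := hmle _ this
        omega
  rw [hT]
  push_cast
  ring
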